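/- Let C ⊆ E be nonempty and convex, let P : E → E satisfy P z ∈ C and ⟨z − P z, c − P z⟩ ≤ 0 for all z ∈ E and c ∈ C (metric projection onto C). Let F : E → E be L-Lipschitz, suppose the set-valued operator S := F + N_C is ρ-comonotone, and let z⋆ ∈ C with −F z⋆ ∈ N_C(z⋆). Let γ satisfy max{0, −2ρ} < γ ≤ 1/L, set H := id − γF, and let α > 0. Consider the CEG+ iteration: z̄^k = P(H z^k), z^{k+1} = z^k − α(H z^k − H z̄^k). Then for every k: ‖z^{k+1} − z⋆‖² ≤ ‖z^k − z⋆‖² − α(1 + 2ρ/γ − α)‖H z̄^k − H z^k‖² − α(1 − γ²L²)‖z̄^k − z^k‖². In particular the CEG+ operator z ↦ z − α(H z − H(P(H z))) is quasi-nonexpansive whenever α ∈ (0, 1 + 2ρ/γ). -/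

import Mathlib

open InnerProductSpace

private lemma stmt14_aux (α ρ γ L N M T1 T2 W : ℝ) (hα : 0 ≤ α) (hγ0 : 0 < γ)
    (hA : ρ / γ * N ≤ T2) (hB : N + (1 - γ ^ 2 * L ^ 2) * M ≤ 2 * T1) :
    W - 2 * α * (T1 + T2) + α ^ 2 * N
      ≤ W - α * (1 + 2 * ρ / γ - α) * N - α * (1 - γ ^ 2 * L ^ 2) * M := by
  have k1 := mul_le_mul_of_nonneg_left hA hα
  have k2 := mul_le_mul_of_nonneg_left hB hα
  ring_nf at k1 k2 ⊢
  linarith [k1, k2]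

/-- descent inequality for the constrained CEG+ iteration
`z̄^k = P(H z^k)`, `z^{k+1} = z^k − α(H z^k − H z̄^k)` with `H = id − γF`,
when `S = F + N_C` is `ρ`-comonotone, `max{0, −2ρ} < γ ≤ 1/L`, `α > 0`:
`‖z^{k+1} − z⋆‖² ≤ ‖z^k − z⋆‖² − α(1 + 2ρ/γ − α)‖H z̄^k − H z^k‖²
  − α(1 − γ²L²)‖z̄^k − z^k‖²`.
In particular the CEG+ operator is quasi-nonexpansive (with respect to the
solution `z⋆`) whenever `α ∈ (0, 1 + 2ρ/γ)`. -/
theorem stmt14 {E : Type*} [NormedAddCommGroup E] [InnerProductSpace ℝ E]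
    (C : Set E) (hCne : C.Nonempty) (hCconv : Convex ℝ C)
    (P : E → E) (hPmem : ∀ z, P z ∈ C)
    (hPproj : ∀ z : E, ∀ c ∈ C, ⟪z - P z, c - P z⟫_ℝ ≤ 0)
    (F : E → E) (L ρ γ α : ℝ) (hL : 0 < L)
    (hF : ∀ z z' : E, ‖F z - F z'‖ ≤ L * ‖z - z'‖)
    (S : E → Set E)
    (hSdef : ∀ zz : E, S zz =
      {v | zz ∈ C ∧ ∃ u, (∀ c ∈ C, ⟪u, c - zz⟫_ℝ ≤ 0) ∧ v = F zz + u})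
    (hS : ∀ z z' v v' : E, v ∈ S z → v' ∈ S z' →
      ⟪v - v', z - z'⟫_ℝ ≥ ρ * ‖v - v'‖^2)
    (zstar : E) (hzC : zstar ∈ C)
    (hzstar : ∀ c ∈ C, ⟪-F zstar, c - zstar⟫_ℝ ≤ 0)
    (hγ : max 0 (-(2 * ρ)) < γ) (hγL : γ ≤ 1 / L) (hα : 0 < α)
    (H : E → E) (hH : ∀ zz, H zz = zz - γ • F zz)
    (z zbar : ℕ → E)
    (hzbar : ∀ k, zbar k = P (H (z k)))
    (hz : ∀ k, z (k + 1) = z k - α • (H (z k) - H (zbar k))) :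
    (∀ k : ℕ, ‖z (k + 1) - zstar‖^2 ≤ ‖z k - zstar‖^2
        - α * (1 + 2 * ρ / γ - α) * ‖H (zbar k) - H (z k)‖^2
        - α * (1 - γ^2 * L^2) * ‖zbar k - z k‖^2) ∧
    (α < 1 + 2 * ρ / γ → ∀ w : E,
      ‖(w - α • (H w - H (P (H w)))) - zstar‖ ≤ ‖w - zstar‖) := by
  have hγ0 : 0 < γ := lt_of_le_of_lt (le_max_left _ _) hγ
  have hρ2 : -(2 * ρ) < γ := lt_of_le_of_lt (le_max_right _ _) hγ
  have hγL1 : γ * L ≤ 1 := by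
    rw [le_div_iff₀ hL] at hγL; exact hγL
  have hγL2 : γ ^ 2 * L ^ 2 ≤ 1 := by nlinarith [mul_pos hγ0 hL]
  have key : ∀ w : E,
      ‖(w - α • (H w - H (P (H w)))) - zstar‖ ^ 2 ≤ ‖w - zstar‖ ^ 2
        - α * (1 + 2 * ρ / γ - α) * ‖H (P (H w)) - H w‖ ^ 2
        - α * (1 - γ ^ 2 * L ^ 2) * ‖P (H w) - w‖ ^ 2 := by
    intro w
    set wb := P (H w) with hwb
    set g := H w - H wb with hgdef
    -- membership of γ⁻¹ • g in S wb
    have hv : γ⁻¹ • g ∈ S wb := by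
      rw [hSdef]
      refine ⟨hPmem _, γ⁻¹ • (H w - wb), ?_, ?_⟩
      · intro c hc
        rw [real_inner_smul_left]
        have h1 : ⟪H w - wb, c - wb⟫_ℝ ≤ 0 := hPproj (H w) c hc
        have h2 : (0:ℝ) ≤ γ⁻¹ := inv_nonneg.mpr hγ0.le
        exact mul_nonpos_of_nonneg_of_nonpos h2 h1
      · rw [hgdef, hH w, hH wb]
        match_scalars <;> field_simp
    have h0 : (0 : E) ∈ S zstar := by
      rw [hSdef]
      exact ⟨hzC, -F zstar, hzstar, by simp⟩
    have hmono := hS wb zstar (γ⁻¹ • g) 0 hv h0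
    rw [sub_zero, real_inner_smul_left, norm_smul] at hmono
    have habs : ‖γ⁻¹‖ = γ⁻¹ := by
      rw [Real.norm_eq_abs, abs_of_nonneg (inv_nonneg.mpr hγ0.le)]
    rw [habs] at hmono
    -- Step A
    have hA : ρ / γ * ‖g‖ ^ 2 ≤ ⟪g, wb - zstar⟫_ℝ := by
      rw [ge_iff_le, mul_pow] at hmono
      rw [div_mul_eq_mul_div, div_le_iff₀ hγ0]
      have hγne : γ ≠ 0 := hγ0.ne'
      have := mul_le_mul_of_nonneg_left hmono (le_of_lt (mul_pos hγ0 hγ0))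
      calc ρ * ‖g‖ ^ 2 = γ * γ * (ρ * (γ⁻¹ ^ 2 * ‖g‖ ^ 2)) := by
            field_simp
        _ ≤ γ * γ * (γ⁻¹ * ⟪g, wb - zstar⟫_ℝ) := this
        _ = ⟪g, wb - zstar⟫_ℝ * γ := by field_simp
    -- Step B
    have hgId : g - (w - wb) = -(γ • (F w - F wb)) := by
      rw [hgdef, hH w, hH wb]; module
    have hnorm1 : ‖g - (w - wb)‖ = γ * ‖F w - F wb‖ := by
      rw [hgId, norm_neg, norm_smul, Real.norm_eq_abs, abs_of_nonneg hγ0.le]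
    have hexp : ‖g - (w - wb)‖ ^ 2
        = ‖g‖ ^ 2 - 2 * ⟪g, w - wb⟫_ℝ + ‖w - wb‖ ^ 2 := by
      rw [@norm_sub_sq_real]
    have hFL : ‖F w - F wb‖ ≤ L * ‖w - wb‖ := hF w wb
    have hB : ‖g‖ ^ 2 + (1 - γ ^ 2 * L ^ 2) * ‖w - wb‖ ^ 2
        ≤ 2 * ⟪g, w - wb⟫_ℝ := by
      have h3 : (γ * ‖F w - F wb‖) ^ 2 ≤ γ ^ 2 * L ^ 2 * ‖w - wb‖ ^ 2 := by
        have hsq := mul_le_mul hFL hFL (norm_nonneg _)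
          (by positivity : (0:ℝ) ≤ L * ‖w - wb‖)
        nlinarith [mul_le_mul_of_nonneg_left hsq (sq_nonneg γ)]
      have h4 : ‖g - (w - wb)‖ ^ 2 = (γ * ‖F w - F wb‖) ^ 2 := by rw [hnorm1]
      linarith [hexp, h3, h4]
    -- Step C : expansion of the step
    have hC : ‖(w - α • g) - zstar‖ ^ 2
        = ‖w - zstar‖ ^ 2
          - 2 * α * (⟪g, w - wb⟫_ℝ + ⟪g, wb - zstar⟫_ℝ) + α ^ 2 * ‖g‖ ^ 2 := by
      have h4 : (w - α • g) - zstar = (w - zstar) - α • g := by abel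
      have h5 : ⟪w - zstar, g⟫_ℝ = ⟪g, w - wb⟫_ℝ + ⟪g, wb - zstar⟫_ℝ := by
        rw [real_inner_comm, ← inner_add_right]
        congr 1
        abel
      rw [h4, @norm_sub_sq_real, real_inner_smul_right, h5, norm_smul,
        Real.norm_eq_abs, mul_pow, sq_abs]
      ring
    have hN1 : ‖H wb - H w‖ = ‖g‖ := by rw [hgdef, norm_sub_rev]
    have hN2 : ‖wb - w‖ = ‖w - wb‖ := norm_sub_rev _ _
    rw [hN1, hN2, hC]
    exact stmt14_aux α ρ γ L (‖g‖ ^ 2) (‖w - wb‖ ^ 2) _ _ _ hα.le hγ0 hA hB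
  constructor
  · intro k
    rw [hz k, hzbar k]
    exact key (z k)
  · intro hαlt w
    have hk := key w
    have h1 : 0 ≤ α * (1 + 2 * ρ / γ - α) :=
      mul_nonneg hα.le (by linarith)
    have h2 : 0 ≤ α * (1 - γ ^ 2 * L ^ 2) := mul_nonneg hα.le (by linarith)
    have hsq : ‖(w - α • (H w - H (P (H w)))) - zstar‖ ^ 2
        ≤ ‖w - zstar‖ ^ 2 := by
      linarith [hk, mul_nonneg h1 (sq_nonneg ‖H (P (H w)) - H w‖),
        mul_nonneg h2 (sq_nonneg ‖P (H w) - w‖)]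
    exact le_of_pow_le_pow_left₀ two_ne_zero (norm_nonneg _) hsq
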